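/- Let α ≥ 1 and μ_α = max_{0≤r≤R_s}(a(r) + g*(r)/α). If φ ∈ C¹([0,R_s]×[0,∞);ℝ) satisfies ∂_t φ(r,t) = −v_s(r)∂_r φ(r,t) + a(r)φ(r,t) for (r,t) ∈ (0,R_s)×(0,∞), then (∫₀^{R_s}|φ(r,t)|^α r^{n−1} dr)^{1/α} ≤ e^{μ_α t} (∫₀^{R_s}|φ(r,0)|^α r^{n−1} dr)^{1/α} for all t ≥ 0. (This is estimate (5.7) established in the proof of Lemma 5.2, where a = f_p* and μ_α = μ_α*.) -/

import Mathlib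

open Set Real intervalIntegral MeasureTheory Filter Topology

private lemma psi_hasDerivAt (p ε x : ℝ) (hε : 0 < ε) :
    HasDerivAt (fun y : ℝ => (y ^ 2 + ε) ^ p) (2 * p * x * (x ^ 2 + ε) ^ (p - 1)) x := by
  have h1 : HasDerivAt (fun y : ℝ => y ^ 2 + ε) (2 * x) x := by
    simpa using (hasDerivAt_pow 2 x).add_const ε
  have h2 : HasDerivAt (fun u : ℝ => u ^ p) (p * (x ^ 2 + ε) ^ (p - 1)) (x ^ 2 + ε) :=
    Real.hasDerivAt_rpow_const (Or.inl (by positivity))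
  have := h2.comp x h1
  refine this.congr_deriv ?_
  ring

private lemma psi_cont (p ε : ℝ) (hε : 0 < ε) :
    Continuous (fun y : ℝ => (y ^ 2 + ε) ^ p) := by
  apply Continuous.rpow_const (by continuity)
  intro x; exact Or.inl (by positivity)

private lemma psi1_cont (p ε : ℝ) (hε : 0 < ε) :
    Continuous (fun y : ℝ => (y ^ 2 + ε) ^ (p - 1)) := by
  apply Continuous.rpow_const (by continuity)
  intro x; exact Or.inl (by positivity)

private lemma real_add_rpow_le (a b p : ℝ) (ha : 0 ≤ a) (hb : 0 ≤ b) (hp0 : 0 ≤ p)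
    (hp1 : p ≤ 1) : (a + b) ^ p ≤ a ^ p + b ^ p := by
  have := NNReal.rpow_add_le_add_rpow a.toNNReal b.toNNReal hp0 hp1
  calc (a + b) ^ p = ((a.toNNReal + b.toNNReal : NNReal) : ℝ) ^ p := by
        rw [NNReal.coe_add, Real.coe_toNNReal _ ha, Real.coe_toNNReal _ hb]
    _ = (((a.toNNReal + b.toNNReal) ^ p : NNReal) : ℝ) := by
        rw [NNReal.coe_rpow]
    _ ≤ ((a.toNNReal ^ p + b.toNNReal ^ p : NNReal) : ℝ) := by exact_mod_cast this
    _ = a ^ p + b ^ p := by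
        rw [NNReal.coe_add, NNReal.coe_rpow, NNReal.coe_rpow,
          Real.coe_toNNReal _ ha, Real.coe_toNNReal _ hb]

/-- error bound: `ε * (x²+ε)^{p-1} ≤ ε^p + (p+1)(M²+1)^p ε`. -/
private lemma err_bound (p ε M x : ℝ) (hp : 0 < p) (hε : 0 < ε) (hε1 : ε ≤ 1)
    (hx : x ^ 2 ≤ M ^ 2) :
    ε * (x ^ 2 + ε) ^ (p - 1) ≤ ε ^ p + (p + 1) * (M ^ 2 + 1) ^ p * ε := by
  have hM1 : (1:ℝ) ≤ M ^ 2 + 1 := by nlinarith [sq_nonneg M]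
  have hxM : x ^ 2 + ε ≤ M ^ 2 + 1 := by linarith
  have hxε : (0:ℝ) < x ^ 2 + ε := by positivity
  rcases le_or_gt p 1 with h1 | h1
  · have h2 : (x ^ 2 + ε) ^ (p - 1) ≤ ε ^ (p - 1) :=
      Real.rpow_le_rpow_of_nonpos hε (by nlinarith [sq_nonneg x]) (by linarith)
    have h3 : ε * ε ^ (p - 1) = ε ^ p := by
      rw [mul_comm, ← Real.rpow_add_one (ne_of_gt hε) (p-1)]; congr 1; ring
    nlinarith [Real.rpow_nonneg (le_of_lt hε) p,
      mul_le_mul_of_nonneg_left h2 (le_of_lt hε),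
      mul_nonneg (mul_nonneg (by linarith : (0:ℝ) ≤ p + 1)
        (Real.rpow_nonneg (by linarith : (0:ℝ) ≤ M ^ 2 + 1) p)) (le_of_lt hε)]
  · have h2 : (x ^ 2 + ε) ^ (p - 1) ≤ (M ^ 2 + 1) ^ (p - 1) :=
      Real.rpow_le_rpow (le_of_lt hxε) hxM (by linarith)
    have h3 : (M ^ 2 + 1) ^ (p - 1) ≤ (M ^ 2 + 1) ^ p :=
      Real.rpow_le_rpow_of_exponent_le hM1 (by linarith)
    have h4 : ε * (x ^ 2 + ε) ^ (p - 1) ≤ (M ^ 2 + 1) ^ p * ε := by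
      rw [mul_comm]
      exact mul_le_mul (h2.trans h3) le_rfl (le_of_lt hε)
        (Real.rpow_nonneg (by linarith) p)
    have h5 : (M ^ 2 + 1) ^ p * ε ≤ (p + 1) * (M ^ 2 + 1) ^ p * ε := by
      have : (0:ℝ) ≤ (M ^ 2 + 1) ^ p * ε :=
        mul_nonneg (Real.rpow_nonneg (by linarith) p) (le_of_lt hε)
      nlinarith
    have h6 : (0:ℝ) ≤ ε ^ p := Real.rpow_nonneg (le_of_lt hε) p
    linarith

/-- approximation bound: `(x²+ε)^p - (x²)^p ≤ ε^p + (p+1)(M²+1)^p ε`. -/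
private lemma psi_approx (p ε M x : ℝ) (hp : 0 < p) (hε : 0 < ε) (hε1 : ε ≤ 1)
    (hx : x ^ 2 ≤ M ^ 2) :
    (x ^ 2 + ε) ^ p ≤ (x ^ 2) ^ p + (ε ^ p + (p + 1) * (M ^ 2 + 1) ^ p * ε) := by
  have hM1 : (1:ℝ) ≤ M ^ 2 + 1 := by nlinarith [sq_nonneg M]
  rcases le_or_gt p 1 with h1 | h1
  · have := real_add_rpow_le (x ^ 2) ε p (sq_nonneg x) (le_of_lt hε) (le_of_lt hp) h1
    have h6 : (0:ℝ) ≤ (p + 1) * (M ^ 2 + 1) ^ p * ε :=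
      mul_nonneg (mul_nonneg (by linarith) (Real.rpow_nonneg (by linarith) p)) (le_of_lt hε)
    linarith
  · -- mean value theorem on Icc (x^2) (x^2+ε)
    set s : Set ℝ := Icc (x ^ 2) (x ^ 2 + ε) with hs
    have hconv : Convex ℝ s := convex_Icc _ _
    have hderiv : ∀ u ∈ s, HasDerivWithinAt (fun u : ℝ => u ^ p) (p * u ^ (p - 1)) s u := by
      intro u hu
      exact (Real.hasDerivAt_rpow_const (Or.inr (le_of_lt h1))).hasDerivWithinAt
    have hbd : ∀ u ∈ s, ‖p * u ^ (p - 1)‖ ≤ p * (M ^ 2 + 1) ^ (p - 1) := by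
      intro u hu
      obtain ⟨hu1, hu2⟩ := hu
      have hu0 : 0 ≤ u := le_trans (sq_nonneg x) hu1
      rw [Real.norm_eq_abs, abs_mul, abs_of_nonneg (le_of_lt hp),
        abs_of_nonneg (Real.rpow_nonneg hu0 _)]
      have : u ^ (p - 1) ≤ (M ^ 2 + 1) ^ (p - 1) :=
        Real.rpow_le_rpow hu0 (by linarith) (by linarith)
      nlinarith
    have hmvt := hconv.norm_image_sub_le_of_norm_hasDerivWithin_le hderiv hbd
      (Set.left_mem_Icc.2 (by linarith)) (Set.right_mem_Icc.2 (by linarith))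
    rw [Real.norm_eq_abs, Real.norm_eq_abs] at hmvt
    have h2 : (x ^ 2 + ε) ^ p - (x ^ 2) ^ p ≤ p * (M ^ 2 + 1) ^ (p - 1) * ε := by
      have := le_trans (le_abs_self _) hmvt
      have hε' : |x ^ 2 + ε - x ^ 2| = ε := by rw [abs_of_nonneg (by linarith)]; ring_nf
      rw [hε'] at this; linarith
    have h3 : (M ^ 2 + 1) ^ (p - 1) ≤ (M ^ 2 + 1) ^ p :=
      Real.rpow_le_rpow_of_exponent_le hM1 (by linarith)
    have h6 : (0:ℝ) ≤ ε ^ p := Real.rpow_nonneg (le_of_lt hε) p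
    have hMp : (0:ℝ) ≤ (M ^ 2 + 1) ^ (p-1) := Real.rpow_nonneg (by linarith) _
    have hB : (0:ℝ) ≤ (M ^ 2 + 1) ^ p := Real.rpow_nonneg (by linarith) _
    have h7 : p * (M ^ 2 + 1) ^ (p - 1) * ε ≤ (p + 1) * (M ^ 2 + 1) ^ p * ε := by
      have h8 := mul_le_mul_of_nonneg_left h3 (le_of_lt hp)
      nlinarith
    linarith

private lemma abs_rpow_eq_sq (x α : ℝ) (hα : 0 ≤ α) : |x| ^ α = (x ^ 2) ^ (α / 2) := by
  rw [← sq_abs, ← Real.rpow_natCast |x| 2, ← Real.rpow_mul (abs_nonneg x)]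
  congr 1; ring

private lemma gronwallBound_cont (K c : ℝ) :
    Continuous (fun q : ℝ × ℝ => gronwallBound q.1 K c q.2) := by
  rcases eq_or_ne K 0 with h | h
  · subst h
    have : (fun q : ℝ × ℝ => gronwallBound q.1 0 c q.2) = fun q : ℝ × ℝ => q.1 + c * q.2 := by
      funext q; rw [gronwallBound_K0]
    rw [this]; fun_prop
  · have : (fun q : ℝ × ℝ => gronwallBound q.1 K c q.2) =
        fun q : ℝ × ℝ => q.1 * Real.exp (K * q.2) + c / K * (Real.exp (K * q.2) - 1) := by
      funext q; rw [gronwallBound_of_K_ne_0 h]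
    rw [this]; fun_prop

private lemma gronwall' {f f' : ℝ → ℝ} {δ K ε a b : ℝ}
    (hf : ContinuousOn f (Icc a b)) (hf' : ∀ x ∈ Ico a b, HasDerivAt f (f' x) x)
    (ha : f a ≤ δ) (bound : ∀ x ∈ Ico a b, f' x ≤ K * f x + ε) :
    ∀ x ∈ Icc a b, f x ≤ gronwallBound δ K ε (x - a) := by
  apply le_gronwallBound_of_liminf_deriv_right_le hf _ ha bound
  intro x hx r hr
  have := ((hf' x hx).hasDerivWithinAt (s := Ici x)).liminf_right_slope_le hr
  apply this.mono
  intro z hz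
  rwa [slope_def_field, div_eq_inv_mul] at hz

open Set Real intervalIntegral MeasureTheory Filter Topology

private lemma gronwallBound_mono' (K c x : ℝ) {δ δ' : ℝ} (h : δ ≤ δ') :
    gronwallBound δ K c x ≤ gronwallBound δ' K c x := by
  rcases eq_or_ne K 0 with hK | hK
  · subst hK; simp only [gronwallBound_K0]; linarith
  · simp only [gronwallBound_of_K_ne_0 hK]
    have := Real.exp_pos (K * x); nlinarith

private lemma gronwallBound_cont2 (K x : ℝ) :
    Continuous (fun q : ℝ × ℝ => gronwallBound q.1 K q.2 x) := by
  rcases eq_or_ne K 0 with h | h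
  · subst h
    have : (fun q : ℝ × ℝ => gronwallBound q.1 0 q.2 x) = fun q : ℝ × ℝ => q.1 + q.2 * x := by
      funext q; rw [gronwallBound_K0]
    rw [this]; fun_prop
  · have : (fun q : ℝ × ℝ => gronwallBound q.1 K q.2 x) =
        fun q : ℝ × ℝ => q.1 * Real.exp (K * x) + q.2 / K * (Real.exp (K * x) - 1) := by
      funext q; rw [gronwallBound_of_K_ne_0 h]
    rw [this]; fun_prop

set_option maxHeartbeats 1600000

/-- Estimate (5.7) from the proof of Lemma 5.2: `L^α`-decay for the transport
semigroup, with rate `μ_α = max_{[0,R_s]} (a + g*/α)`. -/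
theorem stmt_10
    (n : ℕ) (hn : 2 ≤ n) (Rs : ℝ) (hRs : 0 < Rs)
    (vs vs' : ℝ → ℝ)
    (hvs : ∀ r ∈ Icc (0:ℝ) Rs, HasDerivAt vs (vs' r) r)
    (hvs'cont : ContinuousOn vs' (Icc 0 Rs))
    (hvs0 : vs 0 = 0) (hvsRs : vs Rs = 0)
    (gstar : ℝ → ℝ)
    (hgstar : ∀ r ∈ Ioc (0:ℝ) Rs, gstar r = vs' r + ((n - 1 : ℝ) / r) * vs r)
    (hgstar0 : gstar 0 = n * vs' 0)
    (a : ℝ → ℝ) (hacont : ContinuousOn a (Icc 0 Rs))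
    (α : ℝ) (hα : 1 ≤ α)
    (μα : ℝ) (hμα : IsGreatest ((fun r => a r + gstar r / α) '' Icc (0:ℝ) Rs) μα)
    (φ φr φt : ℝ → ℝ → ℝ)
    (hφcont : ContinuousOn (fun p : ℝ × ℝ => φ p.1 p.2) (Icc 0 Rs ×ˢ Ici 0))
    (hφrcont : ContinuousOn (fun p : ℝ × ℝ => φr p.1 p.2) (Icc 0 Rs ×ˢ Ici 0))
    (hφtcont : ContinuousOn (fun p : ℝ × ℝ => φt p.1 p.2) (Icc 0 Rs ×ˢ Ici 0))
    (hφr : ∀ r ∈ Ioo (0:ℝ) Rs, ∀ t ∈ Ioi (0:ℝ),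
      HasDerivAt (fun s => φ s t) (φr r t) r)
    (hφt : ∀ r ∈ Ioo (0:ℝ) Rs, ∀ t ∈ Ioi (0:ℝ),
      HasDerivAt (fun τ => φ r τ) (φt r t) t)
    (heq : ∀ r ∈ Ioo (0:ℝ) Rs, ∀ t ∈ Ioi (0:ℝ),
      φt r t = -vs r * φr r t + a r * φ r t) :
    ∀ t : ℝ, 0 ≤ t →
      (∫ r in (0:ℝ)..Rs, |φ r t| ^ α * r ^ (n - 1)) ^ (1 / α) ≤
        Real.exp (μα * t) *
          (∫ r in (0:ℝ)..Rs, |φ r 0| ^ α * r ^ (n - 1)) ^ (1 / α) := by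
  intro t ht
  rcases eq_or_lt_of_le ht with h0 | h0
  · rw [← h0]; simp
  -- basic facts
  have hRs0 : (0:ℝ) ≤ Rs := hRs.le
  have hIcc : uIcc (0:ℝ) Rs = Icc 0 Rs := uIcc_of_le hRs0
  have hIoc : uIoc (0:ℝ) Rs = Ioc 0 Rs := uIoc_of_le hRs0
  have hα0 : (0:ℝ) < α := lt_of_lt_of_le one_pos hα
  set p : ℝ := α / 2 with hpdef
  have hp : 0 < p := by positivity
  have h2p : 2 * p = α := by rw [hpdef]; ring
  -- continuity in r for fixed time
  have hφsc : ∀ s : ℝ, 0 ≤ s → ContinuousOn (fun r => φ r s) (Icc 0 Rs) := by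
    intro s hs
    have hmap : ContinuousOn (fun r : ℝ => (r, s)) (Icc 0 Rs) :=
      (continuous_id.prodMk continuous_const).continuousOn
    exact hφcont.comp hmap (fun r hr => ⟨hr, hs⟩)
  have hφtsc : ∀ s : ℝ, 0 ≤ s → ContinuousOn (fun r => φt r s) (Icc 0 Rs) := by
    intro s hs
    have hmap : ContinuousOn (fun r : ℝ => (r, s)) (Icc 0 Rs) :=
      (continuous_id.prodMk continuous_const).continuousOn
    exact hφtcont.comp hmap (fun r hr => ⟨hr, hs⟩)
  have hφrsc : ∀ s : ℝ, 0 ≤ s → ContinuousOn (fun r => φr r s) (Icc 0 Rs) := by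
    intro s hs
    have hmap : ContinuousOn (fun r : ℝ => (r, s)) (Icc 0 Rs) :=
      (continuous_id.prodMk continuous_const).continuousOn
    exact hφrcont.comp hmap (fun r hr => ⟨hr, hs⟩)
  have hvscont : ContinuousOn vs (Icc 0 Rs) := fun r hr =>
    ((hvs r hr).continuousAt).continuousWithinAt
  -- bound on |φ| over the compact region
  have hDcomp : IsCompact (Icc (0:ℝ) Rs ×ˢ Icc (0:ℝ) (t+1)) := isCompact_Icc.prod isCompact_Icc
  have hDsub : Icc (0:ℝ) Rs ×ˢ Icc (0:ℝ) (t+1) ⊆ Icc 0 Rs ×ˢ Ici 0 :=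
    prod_mono_right Icc_subset_Ici_self
  obtain ⟨M, hM⟩ := hDcomp.exists_bound_of_continuousOn (hφcont.mono hDsub)
  have hMsq : ∀ r ∈ Icc (0:ℝ) Rs, ∀ s ∈ Icc (0:ℝ) t, (φ r s) ^ 2 ≤ M ^ 2 := by
    intro r hr s hs
    have h1 := hM (r, s) ⟨hr, hs.1, by linarith [hs.2]⟩
    rw [Real.norm_eq_abs] at h1
    nlinarith [abs_nonneg (φ r s), sq_abs (φ r s)]
  -- bound on a
  obtain ⟨CA, hCA⟩ := isCompact_Icc.exists_bound_of_continuousOn hacont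
  have hCA0 : 0 ≤ CA := le_trans (norm_nonneg _) (hCA 0 ⟨le_refl 0, hRs0⟩)
  have hCA' : ∀ r ∈ Icc (0:ℝ) Rs, |a r| ≤ CA := by
    intro r hr; have := hCA r hr; rwa [Real.norm_eq_abs] at this
  -- notation
  set B : ℝ → ℝ := fun ε => ε ^ p + (p + 1) * (M ^ 2 + 1) ^ p * ε with hBdef
  set C3 : ℝ := Rs ^ n / (n : ℝ) with hC3def
  have hC30 : 0 ≤ C3 := by rw [hC3def]; positivity
  set E : ℝ → ℝ := fun s => ∫ r in (0:ℝ)..Rs, |φ r s| ^ α * r ^ (n - 1) with hEdef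
  -- value of ∫ r^(n-1)
  have hpow : (∫ r in (0:ℝ)..Rs, r ^ (n-1)) = C3 := by
    rw [integral_pow]
    have h1 : n - 1 + 1 = n := by omega
    rw [h1, zero_pow (by omega : n ≠ 0), hC3def]
    have h2 : ((n - 1 : ℕ) : ℝ) + 1 = (n : ℝ) := by
      push_cast [Nat.cast_sub (show 1 ≤ n by omega)]; ring
    rw [h2]; ring
  -- continuity/integrability of E-integrand
  have hEcont : ∀ s : ℝ, 0 ≤ s →
      ContinuousOn (fun r => |φ r s| ^ α * r ^ (n - 1)) (Icc 0 Rs) := by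
    intro s hs
    exact (((hφsc s hs).abs).rpow_const (fun r hr => Or.inr hα0.le)).mul
      (continuous_pow _).continuousOn
  have hEint : ∀ s : ℝ, 0 ≤ s →
      IntervalIntegrable (fun r => |φ r s| ^ α * r ^ (n - 1)) volume 0 Rs := by
    intro s hs
    apply ContinuousOn.intervalIntegrable
    rw [hIcc]; exact hEcont s hs
  -- a.e. membership in Ioo for the restricted measure
  have haeIoo : ∀ᵐ r ∂(volume.restrict (Icc (0:ℝ) Rs)), r ∈ Ioo (0:ℝ) Rs := by
    have h1 : ∀ᵐ (r : ℝ) ∂volume, r ∉ ({0, Rs} : Set ℝ) :=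
      measure_eq_zero_iff_ae_notMem.mp
        (Set.Countable.measure_zero (by simp) volume)
    filter_upwards [ae_restrict_of_ae h1, ae_restrict_mem measurableSet_Icc] with r hr1 hr2
    have hne0 : r ≠ 0 := fun h => hr1 (by simp [h])
    have hneR : r ≠ Rs := fun h => hr1 (by simp [h])
    exact ⟨lt_of_le_of_ne hr2.1 (Ne.symm hne0), lt_of_le_of_ne hr2.2 hneR⟩
  have haeRs : ∀ᵐ (r : ℝ) ∂volume, r ≠ Rs := by
    have h1 : ∀ᵐ (r : ℝ) ∂volume, r ∉ ({Rs} : Set ℝ) :=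
      measure_eq_zero_iff_ae_notMem.mp (measure_singleton Rs)
    filter_upwards [h1] with r hr
    simpa using hr
  -- THE KEY ESTIMATE, for each small ε
  have key : ∀ ε : ℝ, 0 < ε → ε ≤ 1 →
      E t ≤ gronwallBound (E 0 + C3 * B ε) (α * μα) (α * CA * C3 * B ε) t := by
    intro ε hε hε1
    set F : ℝ → ℝ := fun s => ∫ r in (0:ℝ)..Rs, ((φ r s)^2 + ε)^p * r^(n-1) with hFdef
    set Fd : ℝ → ℝ := fun s =>
      ∫ r in (0:ℝ)..Rs, (2*p*(φ r s)*((φ r s)^2+ε)^(p-1) * φt r s) * r^(n-1) with hFddef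
    -- continuity and integrability of the integrands
    have hFcontr : ∀ s : ℝ, 0 ≤ s →
        ContinuousOn (fun r => ((φ r s)^2 + ε)^p * r^(n-1)) (Icc 0 Rs) := by
      intro s hs
      exact ((psi_cont p ε hε).comp_continuousOn (hφsc s hs)).mul
        (continuous_pow _).continuousOn
    have hFdcontr : ∀ s : ℝ, 0 ≤ s →
        ContinuousOn (fun r => (2*p*(φ r s)*((φ r s)^2+ε)^(p-1) * φt r s) * r^(n-1))
          (Icc 0 Rs) := by
      intro s hs
      exact (((continuous_const.continuousOn.mul (hφsc s hs)).mul
        ((psi1_cont p ε hε).comp_continuousOn (hφsc s hs))).mul (hφtsc s hs)).mul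
        (continuous_pow _).continuousOn
    have hFint : ∀ s : ℝ, 0 ≤ s →
        IntervalIntegrable (fun r => ((φ r s)^2 + ε)^p * r^(n-1)) volume 0 Rs := by
      intro s hs
      apply ContinuousOn.intervalIntegrable
      rw [hIcc]; exact hFcontr s hs
    have hFdint : ∀ s : ℝ, 0 ≤ s →
        IntervalIntegrable (fun r => (2*p*(φ r s)*((φ r s)^2+ε)^(p-1) * φt r s) * r^(n-1))
          volume 0 Rs := by
      intro s hs
      apply ContinuousOn.intervalIntegrable
      rw [hIcc]; exact hFdcontr s hs
    have hmeasF : ∀ s : ℝ, 0 ≤ s →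
        AEStronglyMeasurable (fun r => ((φ r s)^2 + ε)^p * r^(n-1))
          (volume.restrict (uIoc (0:ℝ) Rs)) := by
      intro s hs
      exact ((hFcontr s hs).mono (by rw [hIoc]; exact Ioc_subset_Icc_self)).aestronglyMeasurable
        measurableSet_uIoc
    have hmeasFd : ∀ s : ℝ, 0 ≤ s →
        AEStronglyMeasurable (fun r => (2*p*(φ r s)*((φ r s)^2+ε)^(p-1) * φt r s) * r^(n-1))
          (volume.restrict (uIoc (0:ℝ) Rs)) := by
      intro s hs
      exact ((hFdcontr s hs).mono (by rw [hIoc]; exact Ioc_subset_Icc_self)).aestronglyMeasurable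
        measurableSet_uIoc
    -- derivative of F under the integral sign
    have hFderiv : ∀ s₀ : ℝ, 0 < s₀ → s₀ ≤ t → HasDerivAt F (Fd s₀) s₀ := by
      intro s₀ hs₀ hs₀t
      have hcontD : ContinuousOn
          (fun q : ℝ × ℝ => (2*p*(φ q.1 q.2)*((φ q.1 q.2)^2+ε)^(p-1) * φt q.1 q.2) * q.1^(n-1))
          (Icc (0:ℝ) Rs ×ˢ Icc (0:ℝ) (t+1)) := by
        apply ContinuousOn.mul _ (Continuous.continuousOn (by fun_prop))
        apply ContinuousOn.mul _ (hφtcont.mono hDsub)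
        exact (continuous_const.continuousOn.mul (hφcont.mono hDsub)).mul
          ((psi1_cont p ε hε).comp_continuousOn (hφcont.mono hDsub))
      obtain ⟨CD, hCD⟩ := hDcomp.exists_bound_of_continuousOn hcontD
      set ρ : ℝ := min (s₀/2) 1 with hρdef
      have hρ : 0 < ρ := lt_min (by linarith) one_pos
      have hball : ∀ s ∈ Metric.ball s₀ ρ, 0 < s ∧ s ≤ t + 1 := by
        intro s hs
        rw [Metric.mem_ball, Real.dist_eq] at hs
        obtain ⟨ha1, ha2⟩ := abs_lt.mp hs
        have hm1 : ρ ≤ s₀/2 := min_le_left _ _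
        have hm2 : ρ ≤ 1 := min_le_right _ _
        constructor
        · linarith
        · linarith
      have H := intervalIntegral.hasDerivAt_integral_of_dominated_loc_of_deriv_le
        (μ := volume) (F := fun s r => ((φ r s)^2 + ε)^p * r^(n-1))
        (F' := fun s r => (2*p*(φ r s)*((φ r s)^2+ε)^(p-1) * φt r s) * r^(n-1))
        (x₀ := s₀) (a := 0) (b := Rs) (bound := fun _ => CD) (Metric.ball_mem_nhds s₀ hρ)
        ?_ ?_ ?_ ?_ ?_ ?_
      · exact H.2
      · filter_upwards [Metric.ball_mem_nhds s₀ hρ] with s hs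
        exact hmeasF s (hball s hs).1.le
      · exact hFint s₀ hs₀.le
      · exact hmeasFd s₀ hs₀.le
      · apply ae_of_all
        intro r hrI s hs
        have hr : r ∈ Icc (0:ℝ) Rs := Ioc_subset_Icc_self (by rwa [hIoc] at hrI)
        exact hCD (r, s) ⟨hr, (hball s hs).1.le, (hball s hs).2⟩
      · exact intervalIntegrable_const
      · filter_upwards [haeRs] with r hrRs
        intro hrI s hs
        rw [hIoc] at hrI
        have hrIoo : r ∈ Ioo (0:ℝ) Rs := ⟨hrI.1, lt_of_le_of_ne hrI.2 hrRs⟩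
        have hd := (psi_hasDerivAt p ε (φ r s) hε).comp s (hφt r hrIoo s (hball s hs).1)
        have hd2 := hd.mul_const (r^(n-1))
        exact hd2
    -- continuity of F on [0, t]
    have hFC : ContinuousOn F (Icc 0 t) := by
      have hcontF2 : ContinuousOn (fun q : ℝ × ℝ => ((φ q.1 q.2)^2+ε)^p * q.1^(n-1))
          (Icc (0:ℝ) Rs ×ˢ Icc (0:ℝ) (t+1)) :=
        ((psi_cont p ε hε).comp_continuousOn (hφcont.mono hDsub)).mul
          (Continuous.continuousOn (by fun_prop))
      obtain ⟨CF, hCF⟩ := hDcomp.exists_bound_of_continuousOn hcontF2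
      intro s₀ hs₀
      apply intervalIntegral.continuousWithinAt_of_dominated_interval (bound := fun _ => CF)
      · filter_upwards [self_mem_nhdsWithin] with s hs
        exact hmeasF s hs.1
      · filter_upwards [self_mem_nhdsWithin] with s hs
        apply ae_of_all
        intro r hrI
        have hr : r ∈ Icc (0:ℝ) Rs := Ioc_subset_Icc_self (by rwa [hIoc] at hrI)
        exact hCF (r, s) ⟨hr, hs.1, by linarith [hs.2]⟩
      · exact intervalIntegrable_const
      · apply ae_of_all
        intro r hrI
        have hr : r ∈ Icc (0:ℝ) Rs := Ioc_subset_Icc_self (by rwa [hIoc] at hrI)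
        have hmap : ContinuousOn (fun s : ℝ => (r, s)) (Icc (0:ℝ) t) :=
          (continuous_const.prodMk continuous_id).continuousOn
        have hφc : ContinuousOn (fun s => φ r s) (Icc (0:ℝ) t) :=
          hφcont.comp hmap (fun s hs => ⟨hr, hs.1⟩)
        have hc : ContinuousOn (fun s => ((φ r s)^2+ε)^p * r^(n-1)) (Icc (0:ℝ) t) :=
          ((psi_cont p ε hε).comp_continuousOn hφc).mul continuous_const.continuousOn
        exact hc s₀ hs₀
    -- the differential inequality
    have hFbound : ∀ s : ℝ, 0 < s → s ≤ t →
        Fd s ≤ (α * μα) * F s + α * CA * C3 * B ε := by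
      intro s hs hst
      have hsIoi : s ∈ Ioi (0:ℝ) := hs
      have hptwise : ∀ r ∈ Ioo (0:ℝ) Rs,
          (2*p*(φ r s)*((φ r s)^2+ε)^(p-1) * φt r s) * r^(n-1)
            + ((vs' r * r^(n-1) + ((n:ℝ)-1) * vs r * r^(n-2)) * ((φ r s)^2+ε)^p
               + vs r * r^(n-1) * (2*p*(φ r s)*((φ r s)^2+ε)^(p-1)) * φr r s)
          ≤ (α*μα) * (((φ r s)^2+ε)^p * r^(n-1)) + (α*CA*(B ε)) * r^(n-1) := by
        intro r hr
        have hrI : r ∈ Icc (0:ℝ) Rs := ⟨hr.1.le, hr.2.le⟩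
        have hR1 : (0:ℝ) ≤ r^(n-1) := pow_nonneg hr.1.le _
        have hψb : (0:ℝ) < (φ r s)^2 + ε := by positivity
        have hψ0 : (0:ℝ) ≤ ((φ r s)^2+ε)^p := Real.rpow_nonneg hψb.le _
        have hψ10 : (0:ℝ) ≤ ((φ r s)^2+ε)^(p-1) := Real.rpow_nonneg hψb.le _
        have hgr : vs' r * r^(n-1) + ((n:ℝ)-1) * vs r * r^(n-2) = gstar r * r^(n-1) := by
          have hrne : r ≠ 0 := ne_of_gt hr.1
          rw [hgstar r ⟨hr.1, hr.2.le⟩]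
          have hr1 : r^(n-1) = r^(n-2) * r := by
            rw [← pow_succ]; congr 1; omega
          rw [hr1]
          field_simp
        have hsplit : (φ r s)^2 * ((φ r s)^2+ε)^(p-1)
            = ((φ r s)^2+ε)^p - ε*((φ r s)^2+ε)^(p-1) := by
          have h1 : ((φ r s)^2+ε)^p = ((φ r s)^2+ε)^(p-1) * ((φ r s)^2+ε) := by
            rw [← Real.rpow_add_one hψb.ne' (p-1)]; congr 1; ring
          rw [h1]; ring
        have hμ : α * a r + gstar r ≤ α * μα := by
          have h1 : a r + gstar r / α ≤ μα := hμα.2 ⟨r, hrI, rfl⟩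
          have h2 := mul_le_mul_of_nonneg_left h1 hα0.le
          calc α * a r + gstar r = α * (a r + gstar r / α) := by
                field_simp
            _ ≤ α * μα := h2
        have herr : ε * ((φ r s)^2+ε)^(p-1) ≤ B ε := by
          rw [hBdef]
          exact err_bound p ε M (φ r s) hp hε hε1 (hMsq r hrI s ⟨hs.le, hst⟩)
        rw [heq r hr s hsIoi]
        have hLHS : (2*p*(φ r s)*((φ r s)^2+ε)^(p-1) * (-vs r * φr r s + a r * φ r s)) * r^(n-1)
            + ((vs' r * r^(n-1) + ((n:ℝ)-1)*vs r*r^(n-2)) * ((φ r s)^2+ε)^p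
               + vs r * r^(n-1) * (2*p*(φ r s)*((φ r s)^2+ε)^(p-1)) * φr r s)
            = (α * a r + gstar r) * (((φ r s)^2+ε)^p * r^(n-1))
              - α * a r * (ε * ((φ r s)^2+ε)^(p-1)) * r^(n-1) := by
          rw [hgr, ← h2p]
          linear_combination (2*p*(a r)*r^(n-1)) * hsplit
        rw [hLHS]
        have h1 : (α * a r + gstar r) * (((φ r s)^2+ε)^p * r^(n-1))
            ≤ (α * μα) * (((φ r s)^2+ε)^p * r^(n-1)) :=
          mul_le_mul_of_nonneg_right hμ (mul_nonneg hψ0 hR1)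
        have h2 : - (α * a r * (ε * ((φ r s)^2+ε)^(p-1)) * r^(n-1))
            ≤ (α*CA*(B ε)) * r^(n-1) := by
          have hna : -(a r) ≤ CA := by
            obtain ⟨hl, hu⟩ := abs_le.mp (hCA' r hrI); linarith
          have hεψ : 0 ≤ ε * ((φ r s)^2+ε)^(p-1) := mul_nonneg hε.le hψ10
          have s1 : α * (-(a r)) ≤ α * CA := mul_le_mul_of_nonneg_left hna hα0.le
          have s2 : α * (-(a r)) * (ε * ((φ r s)^2+ε)^(p-1) * r^(n-1))
              ≤ α * CA * (ε * ((φ r s)^2+ε)^(p-1) * r^(n-1)) :=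
            mul_le_mul_of_nonneg_right s1 (mul_nonneg hεψ hR1)
          have s3 : ε * ((φ r s)^2+ε)^(p-1) * r^(n-1) ≤ B ε * r^(n-1) :=
            mul_le_mul_of_nonneg_right herr hR1
          have s4 : α * CA * (ε * ((φ r s)^2+ε)^(p-1) * r^(n-1)) ≤ α * CA * (B ε * r^(n-1)) :=
            mul_le_mul_of_nonneg_left s3 (by positivity)
          calc - (α * a r * (ε * ((φ r s)^2+ε)^(p-1)) * r^(n-1))
              = α * (-(a r)) * (ε * ((φ r s)^2+ε)^(p-1) * r^(n-1)) := by ring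
            _ ≤ α * CA * (ε * ((φ r s)^2+ε)^(p-1) * r^(n-1)) := s2
            _ ≤ α * CA * (B ε * r^(n-1)) := s4
            _ = (α*CA*(B ε)) * r^(n-1) := by ring
        linarith [h1, h2]
      -- integration by parts term
      have hGint : IntervalIntegrable (fun r =>
          (vs' r * r^(n-1) + ((n:ℝ)-1)*vs r*r^(n-2)) * ((φ r s)^2+ε)^p
            + vs r * r^(n-1) * (2*p*(φ r s)*((φ r s)^2+ε)^(p-1)) * φr r s) volume 0 Rs := by
        apply ContinuousOn.intervalIntegrable
        rw [hIcc]
        apply ContinuousOn.add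
        · exact ((hvs'cont.mul (continuous_pow _).continuousOn).add
            ((continuous_const.continuousOn.mul hvscont).mul
              (continuous_pow _).continuousOn)).mul
            ((psi_cont p ε hε).comp_continuousOn (hφsc s hs.le))
        · exact ((hvscont.mul (continuous_pow _).continuousOn).mul
            ((continuous_const.continuousOn.mul (hφsc s hs.le)).mul
              ((psi1_cont p ε hε).comp_continuousOn (hφsc s hs.le)))).mul (hφrsc s hs.le)
      have hIBP : (∫ r in (0:ℝ)..Rs,
          ((vs' r * r^(n-1) + ((n:ℝ)-1)*vs r*r^(n-2)) * ((φ r s)^2+ε)^p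
            + vs r * r^(n-1) * (2*p*(φ r s)*((φ r s)^2+ε)^(p-1)) * φr r s)) = 0 := by
        have hH : ∀ r ∈ Ioo (0:ℝ) Rs,
            HasDerivAt (fun u => vs u * u^(n-1) * ((φ u s)^2+ε)^p)
              ((vs' r * r^(n-1) + ((n:ℝ)-1)*vs r*r^(n-2)) * ((φ r s)^2+ε)^p
                + vs r * r^(n-1) * (2*p*(φ r s)*((φ r s)^2+ε)^(p-1)) * φr r s) r := by
          intro r hr
          have h1 : HasDerivAt (fun u : ℝ => vs u * u^(n-1))
              (vs' r * r^(n-1) + vs r * (((n-1:ℕ):ℝ) * r^(n-1-1))) r :=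
            (hvs r ⟨hr.1.le, hr.2.le⟩).mul (hasDerivAt_pow (n-1) r)
          have h2 : HasDerivAt (fun u => ((φ u s)^2+ε)^p)
              (2*p*(φ r s)*((φ r s)^2+ε)^(p-1) * φr r s) r :=
            by have := (psi_hasDerivAt p ε (φ r s) hε).comp r (hφr r hr s hsIoi); exact this
          have h3 := h1.mul h2
          refine h3.congr_deriv ?_
          have hc1 : ((n-1:ℕ):ℝ) = (n:ℝ) - 1 := by
            have := Nat.cast_sub (R := ℝ) (show 1 ≤ n by omega)
            simpa using this
          have hc2 : n - 1 - 1 = n - 2 := by omega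
          rw [hc2, hc1]
          ring
        have hHcont : ContinuousOn (fun u => vs u * u^(n-1) * ((φ u s)^2+ε)^p) (Icc 0 Rs) :=
          (hvscont.mul (continuous_pow _).continuousOn).mul
            ((psi_cont p ε hε).comp_continuousOn (hφsc s hs.le))
        have heval := intervalIntegral.integral_eq_sub_of_hasDeriv_right_of_le hRs0 hHcont
          (fun r hr => (hH r hr).hasDerivWithinAt) hGint
        rw [heval, hvsRs, hvs0]
        ring
      -- rewrite Fd s as a single integral including the IBP term
      have hsum : Fd s = ∫ r in (0:ℝ)..Rs,
          ((2*p*(φ r s)*((φ r s)^2+ε)^(p-1) * φt r s) * r^(n-1)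
            + ((vs' r * r^(n-1) + ((n:ℝ)-1)*vs r*r^(n-2)) * ((φ r s)^2+ε)^p
               + vs r * r^(n-1) * (2*p*(φ r s)*((φ r s)^2+ε)^(p-1)) * φr r s)) := by
        rw [intervalIntegral.integral_add (hFdint s hs.le) hGint, hIBP, add_zero, hFddef]
      have hRHSint : IntervalIntegrable (fun r =>
          (α*μα) * (((φ r s)^2+ε)^p * r^(n-1)) + (α*CA*(B ε)) * r^(n-1)) volume 0 Rs :=
        ((hFint s hs.le).const_mul _).add
          (((continuous_pow _).intervalIntegrable 0 Rs).const_mul _)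
      have hae2 : (fun r =>
          (2*p*(φ r s)*((φ r s)^2+ε)^(p-1) * φt r s) * r^(n-1)
            + ((vs' r * r^(n-1) + ((n:ℝ)-1)*vs r*r^(n-2)) * ((φ r s)^2+ε)^p
               + vs r * r^(n-1) * (2*p*(φ r s)*((φ r s)^2+ε)^(p-1)) * φr r s))
          ≤ᵐ[volume.restrict (Icc (0:ℝ) Rs)]
          (fun r => (α*μα) * (((φ r s)^2+ε)^p * r^(n-1)) + (α*CA*(B ε)) * r^(n-1)) := by
        filter_upwards [haeIoo] with r hr
        exact hptwise r hr
      have hmono := intervalIntegral.integral_mono_ae_restrict hRs0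
        ((hFdint s hs.le).add hGint) hRHSint hae2
      have hRHSval : (∫ r in (0:ℝ)..Rs,
          ((α*μα) * (((φ r s)^2+ε)^p * r^(n-1)) + (α*CA*(B ε)) * r^(n-1)))
          = (α*μα) * F s + α * CA * C3 * B ε := by
        rw [intervalIntegral.integral_add ((hFint s hs.le).const_mul _)
          (((continuous_pow _).intervalIntegrable 0 Rs).const_mul _),
          intervalIntegral.integral_const_mul, intervalIntegral.integral_const_mul, hpow]
        simp only [hFdef]
        ring
      rw [hsum]
      exact le_trans hmono (le_of_eq hRHSval)
    -- Gronwall on [s₀, t] for every s₀ ∈ (0, t)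
    have hGron : ∀ s₀ ∈ Ioo (0:ℝ) t,
        F t ≤ gronwallBound (F s₀) (α*μα) (α * CA * C3 * B ε) (t - s₀) := by
      intro s₀ hs₀
      have h := gronwall' (δ := F s₀) (K := α*μα) (ε := α * CA * C3 * B ε)
        (hFC.mono (Icc_subset_Icc hs₀.1.le le_rfl))
        (fun x hx => hFderiv x (lt_of_lt_of_le hs₀.1 hx.1) hx.2.le)
        le_rfl
        (fun x hx => hFbound x (lt_of_lt_of_le hs₀.1 hx.1) hx.2.le)
      exact h t ⟨hs₀.2.le, le_rfl⟩
    -- take s₀ → 0⁺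
    have hFt0 : F t ≤ gronwallBound (F 0) (α*μα) (α * CA * C3 * B ε) t := by
      have hne : (𝓝[Ioo (0:ℝ) t] (0:ℝ)).NeBot := by
        rw [← mem_closure_iff_nhdsWithin_neBot, closure_Ioo h0.ne]
        exact ⟨le_rfl, h0.le⟩
      have h1 : Tendsto F (𝓝[Ioo (0:ℝ) t] 0) (𝓝 (F 0)) :=
        (hFC 0 ⟨le_rfl, h0.le⟩).mono Ioo_subset_Icc_self
      have h2 : Tendsto (fun s₀ : ℝ => t - s₀) (𝓝[Ioo (0:ℝ) t] 0) (𝓝 t) := by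
        have hc : Continuous (fun s₀ : ℝ => t - s₀) := by fun_prop
        have h3 := hc.tendsto 0
        simp only [sub_zero] at h3
        exact h3.mono_left nhdsWithin_le_nhds
      have h3 := ((gronwallBound_cont (α*μα) (α * CA * C3 * B ε)).tendsto (F 0, t)).comp
        (h1.prodMk_nhds h2)
      apply ge_of_tendsto h3
      filter_upwards [self_mem_nhdsWithin] with s₀ hs₀
      exact hGron s₀ hs₀
    -- compare E and F at times t and 0
    have hEF : E t ≤ F t := by
      apply intervalIntegral.integral_mono_on hRs0 (hEint t ht) (hFint t ht)
      intro r hr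
      have h1 : |φ r t| ^ α ≤ ((φ r t)^2 + ε)^p := by
        rw [abs_rpow_eq_sq _ _ hα0.le, ← hpdef]
        exact Real.rpow_le_rpow (sq_nonneg _) (by linarith) hp.le
      exact mul_le_mul_of_nonneg_right h1 (pow_nonneg hr.1 _)
    have hFE0 : F 0 ≤ E 0 + C3 * B ε := by
      have hint2 : IntervalIntegrable (fun r => |φ r 0|^α * r^(n-1) + B ε * r^(n-1))
          volume 0 Rs :=
        (hEint 0 le_rfl).add (((continuous_pow _).intervalIntegrable 0 Rs).const_mul _)
      have hmono := intervalIntegral.integral_mono_on hRs0 (hFint 0 le_rfl) hint2 ?_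
      · calc F 0 ≤ _ := hmono
          _ = E 0 + C3 * B ε := by
            rw [intervalIntegral.integral_add (hEint 0 le_rfl)
              (((continuous_pow _).intervalIntegrable 0 Rs).const_mul _),
              intervalIntegral.integral_const_mul, hpow]
            simp only [hEdef]
            ring
      · intro r hr
        have h1 : ((φ r 0)^2+ε)^p ≤ |φ r 0|^α + B ε := by
          rw [abs_rpow_eq_sq _ _ hα0.le, ← hpdef, hBdef]
          exact psi_approx p ε M (φ r 0) hp hε hε1 (hMsq r hr 0 ⟨le_rfl, h0.le⟩)
        have h2 := mul_le_mul_of_nonneg_right h1 (pow_nonneg hr.1 (n-1))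
        exact h2.trans_eq (by ring)
    calc E t ≤ F t := hEF
      _ ≤ gronwallBound (F 0) (α*μα) (α * CA * C3 * B ε) t := hFt0
      _ ≤ gronwallBound (E 0 + C3 * B ε) (α*μα) (α * CA * C3 * B ε) t :=
        gronwallBound_mono' _ _ _ hFE0
  -- limit ε → 0
  have hfinal : E t ≤ E 0 * Real.exp (α * μα * t) := by
    have hBtend : Tendsto B (𝓝[>] (0:ℝ)) (𝓝 0) := by
      have h1 : Tendsto (fun ε : ℝ => ε ^ p) (𝓝 0) (𝓝 0) := by
        have := (Real.continuousAt_rpow_const 0 p (Or.inr hp.le)).tendsto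
        rwa [Real.zero_rpow hp.ne'] at this
      have h2 : Tendsto (fun ε : ℝ => (p + 1) * (M ^ 2 + 1) ^ p * ε) (𝓝 0) (𝓝 0) := by
        have hc : Continuous (fun ε : ℝ => (p + 1) * (M ^ 2 + 1) ^ p * ε) := by fun_prop
        have := hc.tendsto 0
        simpa using this
      have h3 := h1.add h2
      rw [hBdef]
      simpa using h3.mono_left nhdsWithin_le_nhds
    have hWtend : Tendsto
        (fun y => gronwallBound (E 0 + C3 * y) (α * μα) (α * CA * C3 * y) t)
        (𝓝 0) (𝓝 (E 0 * Real.exp (α * μα * t))) := by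
      have h2 : Tendsto (fun y : ℝ => ((E 0 + C3 * y), (α * CA * C3 * y)))
          (𝓝 0) (𝓝 (E 0, 0)) := by
        have hc : Continuous (fun y : ℝ => ((E 0 + C3 * y), (α * CA * C3 * y))) := by fun_prop
        have := hc.tendsto 0
        simpa using this
      have h3 := ((gronwallBound_cont2 (α * μα) t).tendsto (E 0, 0)).comp h2
      simpa [gronwallBound_ε0, Function.comp_def] using h3
    apply ge_of_tendsto (hWtend.comp hBtend)
    filter_upwards [Ioc_mem_nhdsGT one_pos] with ε hε
    exact key ε hε.1 hε.2
  -- conclusion by taking the α-th root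
  have hE0 : 0 ≤ E 0 := by
    rw [hEdef]
    apply intervalIntegral.integral_nonneg hRs0
    intro r hr
    exact mul_nonneg (Real.rpow_nonneg (abs_nonneg _) _) (pow_nonneg hr.1 _)
  have hEt : 0 ≤ E t := by
    rw [hEdef]
    apply intervalIntegral.integral_nonneg hRs0
    intro r hr
    exact mul_nonneg (Real.rpow_nonneg (abs_nonneg _) _) (pow_nonneg hr.1 _)
  show E t ^ (1/α) ≤ Real.exp (μα * t) * E 0 ^ (1/α)
  calc E t ^ (1/α) ≤ (E 0 * Real.exp (α * μα * t)) ^ (1/α) :=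
        Real.rpow_le_rpow hEt hfinal (by positivity)
    _ = E 0 ^ (1/α) * (Real.exp (α * μα * t)) ^ (1/α) :=
        Real.mul_rpow hE0 (Real.exp_pos _).le
    _ = E 0 ^ (1/α) * Real.exp (μα * t) := by
        rw [← Real.exp_mul]
        congr 2
        field_simp
    _ = Real.exp (μα * t) * E 0 ^ (1/α) := by ring
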